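/- For any two density matrices ρ and σ of the same finite dimension and any real η > 0, the density matrix ω := (2^{−η} σ + ρ)/(1 + 2^{−η}) satisfies both (1/2)‖ω − ρ‖₁ ≤ 2^{−η}/(1 + 2^{−η}) and D_Ω(ω‖σ) ≤ D_max(ρ‖σ) + log₂(2^η + 1). -/

import Mathlib

open scoped BigOperators ComplexOrder
open Filter Topology

noncomputable section

namespace QRT

open scoped Classical

variable {ι κ : Type*} [Fintype ι] [DecidableEq ι] [Fintype κ] [DecidableEq κ]

/-- A density matrix (quantum state): positive semidefinite with unit trace. -/
def IsState (ρ : Matrix ι ι ℂ) : Prop :=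
  ρ.PosSemidef ∧ ρ.trace = 1

/-- Loewner order: `A ≤ B` iff `B - A` is positive semidefinite. -/
def Loewner (A B : Matrix ι ι ℂ) : Prop :=
  (B - A).PosSemidef

/-- Trace norm (sum of singular values): `‖A‖₁ = Tr √(AᴴA)`. -/
def traceNorm (A : Matrix ι ι ℂ) : ℝ :=
  (((Matrix.posSemidef_conjTranspose_mul_self A).1.eigenvectorUnitary : Matrix ι ι ℂ) *
      Matrix.diagonal (((↑) : ℝ → ℂ) ∘ (Real.sqrt ·) ∘ (Matrix.posSemidef_conjTranspose_mul_self A).1.eigenvalues) *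
      (star (Matrix.posSemidef_conjTranspose_mul_self A).1.eigenvectorUnitary : Matrix ι ι ℂ)).trace.re

/-- The max-relative entropy `D_max(ρ‖σ)` (base 2); `+∞` if infeasible. -/
def Dmax (ρ σ : Matrix ι ι ℂ) : EReal :=
  sInf {x : EReal | ∃ l : ℝ, 0 < l ∧ Loewner ρ (l • σ) ∧ x = ((Real.logb 2 l : ℝ) : EReal)}

/-- The projective relative entropy (Hilbert projective metric). -/
def DOmega (ρ σ : Matrix ι ι ℂ) : EReal :=
  Dmax ρ σ + Dmax σ ρ

/-- Support inclusion `supp ρ ⊆ supp σ` for positive semidefinite matrices,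
expressed as kernel inclusion `ker σ ⊆ ker ρ`. -/
def SuppLe (ρ σ : Matrix ι ι ℂ) : Prop :=
  ∀ v : ι → ℂ, σ.mulVec v = 0 → ρ.mulVec v = 0

/-- Application of a real function to a Hermitian matrix via the spectral decomposition. -/
def mfun (f : ℝ → ℝ) (A : Matrix ι ι ℂ) : Matrix ι ι ℂ :=
  if hA : A.IsHermitian then
    (hA.eigenvectorUnitary : Matrix ι ι ℂ) *
      Matrix.diagonal (fun i => (f (hA.eigenvalues i) : ℂ)) *
      (hA.eigenvectorUnitary : Matrix ι ι ℂ).conjTranspose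
  else 0

/-- Base-2 matrix logarithm on the support of a positive semidefinite matrix. -/
def mlog2 (A : Matrix ι ι ℂ) : Matrix ι ι ℂ :=
  mfun (fun x => if x ≤ 0 then 0 else Real.logb 2 x) A

/-- Umegaki quantum relative entropy (base 2):
`D(ρ‖σ) = Tr[ρ (log₂ ρ - log₂ σ)]` if `supp ρ ⊆ supp σ`, and `+∞` otherwise. -/
def Drel (ρ σ : Matrix ι ι ℂ) : EReal :=
  if SuppLe ρ σ then (((ρ * (mlog2 ρ - mlog2 σ)).trace.re : ℝ) : EReal) else ⊤

/-- Relative entropy of a resource: `D_F(ρ) = min_{σ ∈ F} D(ρ‖σ)`. -/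
def DF (F : Set (Matrix ι ι ℂ)) (ρ : Matrix ι ι ℂ) : EReal :=
  sInf {x : EReal | ∃ σ ∈ F, x = Drel ρ σ}

/-- Max-relative entropy of a resource. -/
def DmaxF (F : Set (Matrix ι ι ℂ)) (ρ : Matrix ι ι ℂ) : EReal :=
  sInf {x : EReal | ∃ σ ∈ F, x = Dmax ρ σ}

/-- Projective relative entropy of a resource: `D_{Ω,F}(ρ) = min_{σ ∈ F} D_Ω(ρ‖σ)`. -/
def DOmegaF (F : Set (Matrix ι ι ℂ)) (ρ : Matrix ι ι ℂ) : EReal :=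
  sInf {x : EReal | ∃ σ ∈ F, x = DOmega ρ σ}

/-- Min-relative entropy of a resource for a pure state `ψ`:
`D_{min,F}(ψ) = min_{σ∈F} (-log₂⟨ψ|σ|ψ⟩)` where `⟨ψ|σ|ψ⟩ = Tr(ψσ)`. -/
def DminF (F : Set (Matrix ι ι ℂ)) (ψ : Matrix ι ι ℂ) : EReal :=
  sInf {x : EReal | ∃ σ ∈ F, 0 < ((ψ * σ).trace).re ∧
    x = ((-(Real.logb 2 (((ψ * σ).trace).re)) : ℝ) : EReal)}

/-- The convex cone generated by a set of states. -/
def cone (F : Set (Matrix ι ι ℂ)) : Set (Matrix ι ι ℂ) :=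
  {A | ∃ t : ℝ, 0 ≤ t ∧ ∃ σ ∈ F, A = t • σ}

/-- `D_s(ω‖σ) := inf { log₂ λ : λ > 0, λσ - ω ∈ cone(F) }`. -/
def Ds (F : Set (Matrix ι ι ℂ)) (ω σ : Matrix ι ι ℂ) : EReal :=
  sInf {x : EReal | ∃ l : ℝ, 0 < l ∧ (l • σ - ω) ∈ cone F ∧ x = ((Real.logb 2 l : ℝ) : EReal)}

/-- The free variant of the projective relative entropy:
`D_{Ω,s,F}(ω) := min_{σ∈F} [ D_s(ω‖σ) + D_max(σ‖ω) ]`. -/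
def DOmegasF (F : Set (Matrix ι ι ℂ)) (ω : Matrix ι ι ℂ) : EReal :=
  sInf {x : EReal | ∃ σ ∈ F, x = Ds F ω σ + Dmax σ ω}

/-- The standard robustness `R_{s,F}(ρ) := inf{ λ ≥ 0 : ∃ σ ∈ F, (ρ+λσ)/(1+λ) ∈ F }`,
as an extended real (`+∞` if infeasible). -/
def Rs (F : Set (Matrix ι ι ℂ)) (ρ : Matrix ι ι ℂ) : EReal :=
  sInf {x : EReal | ∃ l : ℝ, 0 ≤ l ∧ (∃ σ ∈ F, ((1 + l)⁻¹ • (ρ + l • σ)) ∈ F) ∧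
    x = ((l : ℝ) : EReal)}

/-- `log₂(1 + R_{s,F}(ρ))`, the logarithmic standard robustness. -/
def logRs (F : Set (Matrix ι ι ℂ)) (ρ : Matrix ι ι ℂ) : EReal :=
  sInf {x : EReal | ∃ l : ℝ, 0 ≤ l ∧ (∃ σ ∈ F, ((1 + l)⁻¹ • (ρ + l • σ)) ∈ F) ∧
    x = ((Real.logb 2 (1 + l) : ℝ) : EReal)}

/-- The Choi matrix of a linear map on matrices. -/
def choi (Λ : Matrix ι ι ℂ →ₗ[ℂ] Matrix κ κ ℂ) : Matrix (ι × κ) (ι × κ) ℂ :=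
  Matrix.of fun p q => Λ (Matrix.single p.1 q.1 1) p.2 q.2

/-- Complete positivity, via Choi's theorem. -/
def IsCP (Λ : Matrix ι ι ℂ →ₗ[ℂ] Matrix κ κ ℂ) : Prop :=
  (choi Λ).PosSemidef

/-- Trace non-increasing on positive semidefinite inputs. -/
def TraceNonincreasing (Λ : Matrix ι ι ℂ →ₗ[ℂ] Matrix κ κ ℂ) : Prop :=
  ∀ A : Matrix ι ι ℂ, A.PosSemidef → ((Λ A).trace).re ≤ (A.trace).re

/-- Normalization `A ↦ A / Tr A`. -/
def normalize (A : Matrix ι ι ℂ) : Matrix ι ι ℂ :=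
  (A.trace)⁻¹ • A

/-- A free probabilistic operation: a completely positive trace–non-increasing map
that sends free states of `F` to free states of `F'` after renormalization. -/
def IsFreeOp (F : Set (Matrix ι ι ℂ)) (F' : Set (Matrix κ κ ℂ))
    (Λ : Matrix ι ι ℂ →ₗ[ℂ] Matrix κ κ ℂ) : Prop :=
  IsCP Λ ∧ TraceNonincreasing Λ ∧
    ∀ σ ∈ F, 0 < ((Λ σ).trace).re → normalize (Λ σ) ∈ F'

/-- `n`-fold tensor (Kronecker) power of a matrix, indexed by `Fin n → ι`. -/
def tpow (ρ : Matrix ι ι ℂ) (n : ℕ) : Matrix (Fin n → ι) (Fin n → ι) ℂ :=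
  Matrix.of fun i j => ∏ k, ρ (i k) (j k)

/-- Tensor product of tensor-power-indexed matrices. -/
def tmul {n m : ℕ} (A : Matrix (Fin n → ι) (Fin n → ι) ℂ)
    (B : Matrix (Fin m → ι) (Fin m → ι) ℂ) :
    Matrix (Fin (n + m) → ι) (Fin (n + m) → ι) ℂ :=
  Matrix.of fun i j =>
    A (fun k => i (Fin.castAdd m k)) (fun k => j (Fin.castAdd m k)) *
      B (fun k => i (Fin.natAdd n k)) (fun k => j (Fin.natAdd n k))

/-- Partial trace over the tensor factor in position `k`. -/
def ptrace {n : ℕ} (σ : Matrix (Fin (n + 1) → ι) (Fin (n + 1) → ι) ℂ) (k : Fin (n + 1)) :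
    Matrix (Fin n → ι) (Fin n → ι) ℂ :=
  Matrix.of fun i j => ∑ x : ι, σ (k.insertNth x i) (k.insertNth x j)

/-- Axioms I–IV for a family of free-state sets on tensor powers of `ℂ^d`:
convex closed sets of states, containing the powers of a full-rank free state,
closed under partial traces and under tensor products. -/
structure IsFreeFamily (d : ℕ)
    (F : ∀ n : ℕ, Set (Matrix (Fin n → Fin d) (Fin n → Fin d) ℂ)) : Prop where
  states : ∀ n, ∀ σ ∈ F n, IsState σ
  convex : ∀ n, Convex ℝ (F n)
  closed : ∀ n, IsClosed (F n)
  fullRank : ∃ σ : Matrix (Fin d) (Fin d) ℂ, IsState σ ∧ σ.PosDef ∧ ∀ n, tpow σ n ∈ F n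
  ptrace_mem : ∀ n, ∀ σ ∈ F (n + 1), ∀ k : Fin (n + 1), ptrace σ k ∈ F n
  tmul_mem : ∀ n m, ∀ σ ∈ F n, ∀ σ' ∈ F m, tmul σ σ' ∈ F (n + m)

variable {I K : ℕ → Type*} [∀ n, Fintype (I n)] [∀ n, DecidableEq (I n)]
  [∀ n, Fintype (K n)] [∀ n, DecidableEq (K n)]

/-- The smallest trace-distance error achievable when transforming `ρseq n` into
`ωseq ⌊rn⌋` by free probabilistic operations. -/
def convErr (F : ∀ n, Set (Matrix (I n) (I n) ℂ)) (F' : ∀ n, Set (Matrix (K n) (K n) ℂ))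
    (ρseq : ∀ n, Matrix (I n) (I n) ℂ) (ωseq : ∀ n, Matrix (K n) (K n) ℂ)
    (r : ℝ) (n : ℕ) : ℝ :=
  sInf {e : ℝ |
    ∃ Λ : Matrix (I n) (I n) ℂ →ₗ[ℂ] Matrix (K ⌊r * n⌋₊) (K ⌊r * n⌋₊) ℂ,
      IsFreeOp (F n) (F' ⌊r * n⌋₊) Λ ∧
      e = (1 / 2) * traceNorm (normalize (Λ (ρseq n)) - ωseq ⌊r * n⌋₊)}

/-- The probabilistic transformation rate `r_prob`, as an extended real. -/
def rprob (F : ∀ n, Set (Matrix (I n) (I n) ℂ)) (F' : ∀ n, Set (Matrix (K n) (K n) ℂ))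
    (ρseq : ∀ n, Matrix (I n) (I n) ℂ) (ωseq : ∀ n, Matrix (K n) (K n) ℂ) : EReal :=
  sSup {x : EReal | ∃ r : ℝ, 0 ≤ r ∧ x = (r : EReal) ∧
    Tendsto (fun n => convErr F F' ρseq ωseq r n) atTop (nhds 0)}

/-- The strong converse probabilistic transformation rate `r†_prob`. -/
def rprobSC (F : ∀ n, Set (Matrix (I n) (I n) ℂ)) (F' : ∀ n, Set (Matrix (K n) (K n) ℂ))
    (ρseq : ∀ n, Matrix (I n) (I n) ℂ) (ωseq : ∀ n, Matrix (K n) (K n) ℂ) : EReal :=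
  sSup {x : EReal | ∃ r : ℝ, 0 ≤ r ∧ x = (r : EReal) ∧
    liminf (fun n => convErr F F' ρseq ωseq r n) atTop < 1}

/-- A pure state `ψ = |v⟩⟨v|` with `‖v‖ = 1`. -/
def IsPure (ψ : Matrix ι ι ℂ) : Prop :=
  IsState ψ ∧ ∃ v : ι → ℂ, ψ = Matrix.of fun i j => v i * (starRingEnd ℂ) (v j)

/-- Tensor product across the A/B bipartition of `n`-copy bipartite operators. -/
def abProd {dA dB n : ℕ} (A : Matrix (Fin n → Fin dA) (Fin n → Fin dA) ℂ)
    (B : Matrix (Fin n → Fin dB) (Fin n → Fin dB) ℂ) :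
    Matrix (Fin n → Fin dA × Fin dB) (Fin n → Fin dA × Fin dB) ℂ :=
  Matrix.of fun i j =>
    A (fun k => (i k).1) (fun k => (j k).1) * B (fun k => (i k).2) (fun k => (j k).2)

/-- Separable states on `n` copies of a bipartite system `ℂ^{dA} ⊗ ℂ^{dB}`, with respect to
the bipartition grouping all `A` factors against all `B` factors. -/
def SEP (dA dB n : ℕ) :
    Set (Matrix (Fin n → Fin dA × Fin dB) (Fin n → Fin dA × Fin dB) ℂ) :=
  closure (convexHull ℝ {ρ | ∃ A B, IsState A ∧ IsState B ∧ ρ = abProd A B})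

/-- Separable states on a single copy of `ℂ^{dA} ⊗ ℂ^{dB}`. -/
def SEP1 (dA dB : ℕ) : Set (Matrix (Fin dA × Fin dB) (Fin dA × Fin dB) ℂ) :=
  closure (convexHull ℝ
    {ρ | ∃ (A : Matrix (Fin dA) (Fin dA) ℂ) (B : Matrix (Fin dB) (Fin dB) ℂ),
      IsState A ∧ IsState B ∧ ρ = Matrix.of fun p q => A p.1 q.1 * B p.2 q.2})

/-- Partial transpose on the second subsystem (single copy). -/
def ptrans1 {dA dB : ℕ} (M : Matrix (Fin dA × Fin dB) (Fin dA × Fin dB) ℂ) :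
    Matrix (Fin dA × Fin dB) (Fin dA × Fin dB) ℂ :=
  Matrix.of fun p q => M (p.1, q.2) (q.1, p.2)

/-- PPT states on a single copy. -/
def PPT1 (dA dB : ℕ) : Set (Matrix (Fin dA × Fin dB) (Fin dA × Fin dB) ℂ) :=
  {σ | IsState σ ∧ (ptrans1 σ).PosSemidef}

/-- Partial transpose over all `B` factors of an `n`-copy bipartite system. -/
def ptransN {dA dB n : ℕ}
    (M : Matrix (Fin n → Fin dA × Fin dB) (Fin n → Fin dA × Fin dB) ℂ) :
    Matrix (Fin n → Fin dA × Fin dB) (Fin n → Fin dA × Fin dB) ℂ :=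
  Matrix.of fun i j => M (fun k => ((i k).1, (j k).2)) (fun k => ((j k).1, (i k).2))

/-- PPT states on `n` copies, w.r.t. the bipartition grouping all `A` factors
against all `B` factors. -/
def PPTn (dA dB n : ℕ) :
    Set (Matrix (Fin n → Fin dA × Fin dB) (Fin n → Fin dA × Fin dB) ℂ) :=
  {σ | IsState σ ∧ (ptransN σ).PosSemidef}

/-- The maximally entangled state `Φ_d` on `ℂ^d ⊗ ℂ^d`. -/
def PhiMax (d : ℕ) : Matrix (Fin d × Fin d) (Fin d × Fin d) ℂ :=
  Matrix.of fun p q => if p.1 = p.2 ∧ q.1 = q.2 then ((d : ℂ))⁻¹ else 0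

/-- The isotropic state `ρ_p = p Φ_d + (1-p)(I - Φ_d)/(d²-1)`. -/
def iso (d : ℕ) (p : ℝ) : Matrix (Fin d × Fin d) (Fin d × Fin d) ℂ :=
  p • PhiMax d + ((1 - p) / ((d : ℝ) ^ 2 - 1)) • (1 - PhiMax d)



open scoped Matrix

section Helpers

lemma real_smul_eq {d : ℕ} (c : ℝ) (M : Matrix (Fin d) (Fin d) ℂ) :
    c • M = (c : ℂ) • M := by
  ext i j; simp [Complex.real_smul]

lemma psd_smul' {d : ℕ} {M : Matrix (Fin d) (Fin d) ℂ} (hM : M.PosSemidef)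
    {c : ℝ} (hc : 0 ≤ c) : (c • M).PosSemidef := by
  rw [real_smul_eq]
  exact hM.smul (by exact_mod_cast hc : (0:ℂ) ≤ (c:ℂ))

lemma psd_diag_nonneg {d : ℕ} {M : Matrix (Fin d) (Fin d) ℂ} (hM : M.PosSemidef)
    (i : Fin d) : 0 ≤ M i i := by
  exact hM.diag_nonneg

lemma psd_trace_nonneg {d : ℕ} {M : Matrix (Fin d) (Fin d) ℂ} (hM : M.PosSemidef) :
    0 ≤ M.trace := by
  rw [Matrix.trace]
  exact Finset.sum_nonneg fun i _ => psd_diag_nonneg hM i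

lemma trace_eq_sum_eigs {d : ℕ} {A : Matrix (Fin d) (Fin d) ℂ} (hA : A.IsHermitian) :
    A.trace = ∑ i, (hA.eigenvalues i : ℂ) := by
  exact hA.trace_eq_sum_eigenvalues

lemma conj_diag_psd {d : ℕ} (U : Matrix (Fin d) (Fin d) ℂ) (f : Fin d → ℝ)
    (hf : ∀ i, 0 ≤ f i) :
    (U * Matrix.diagonal (fun i => (f i : ℂ)) * star U).PosSemidef := by
  have : (Matrix.diagonal (fun i => (f i : ℂ))).PosSemidef :=
    Matrix.PosSemidef.diagonal (fun i => by simpa using Complex.zero_le_real.mpr (hf i))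
  simpa [Matrix.star_eq_conjTranspose] using this.mul_mul_conjTranspose_same U

lemma traceNorm_eq_cfc {d : ℕ} (A : Matrix (Fin d) (Fin d) ℂ) :
    traceNorm A = (cfc Real.sqrt (Aᴴ * A)).trace.re := by
  rw [(Matrix.posSemidef_conjTranspose_mul_self A).1.cfc_eq]
  rfl

lemma trace_cfc {d : ℕ} {A : Matrix (Fin d) (Fin d) ℂ} (hA : A.IsHermitian) (f : ℝ → ℝ) :
    (cfc f A).trace = ∑ i, ((f (hA.eigenvalues i) : ℝ) : ℂ) := by
  rw [hA.cfc_eq, Matrix.IsHermitian.cfc, Unitary.conjStarAlgAut_apply, Matrix.trace_mul_cycle,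
    Unitary.coe_star_mul_self, one_mul, Matrix.trace_diagonal]
  rfl

lemma traceNorm_hermitian {d : ℕ} {A : Matrix (Fin d) (Fin d) ℂ} (hA : A.IsHermitian) :
    traceNorm A = ∑ i, |hA.eigenvalues i| := by
  have hsa : IsSelfAdjoint A := hA
  have hmul : Aᴴ * A = cfc (fun x : ℝ => x * x) A := by
    rw [hA.eq, cfc_mul (fun x : ℝ => x) (fun x : ℝ => x) A, cfc_id' ℝ A]
  rw [traceNorm_eq_cfc, hmul, ← cfc_comp' Real.sqrt (fun x : ℝ => x * x) A]
  have habs : (fun x : ℝ => Real.sqrt (x * x)) = fun x => |x| := by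
    funext x; exact Real.sqrt_mul_self_eq_abs x
  rw [habs, trace_cfc hA]
  simp

lemma traceNorm_real_smul {d : ℕ} {c : ℝ} (hc : 0 ≤ c) (A : Matrix (Fin d) (Fin d) ℂ) :
    traceNorm (c • A) = c * traceNorm A := by
  have hS := Matrix.posSemidef_conjTranspose_mul_self A
  have hkey : (c • A)ᴴ * (c • A) = ((c * c : ℝ)) • (Aᴴ * A) := by
    rw [real_smul_eq, real_smul_eq, Matrix.conjTranspose_smul, Matrix.smul_mul,
      Matrix.mul_smul, smul_smul]
    congr 1
    rw [Complex.star_def, Complex.conj_ofReal, Complex.ofReal_mul]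
  have hsa : IsSelfAdjoint (Aᴴ * A) := hS.1
  have hf : (fun x : ℝ => Real.sqrt ((c * c) • x)) = fun x => c * Real.sqrt x := by
    funext x
    rw [smul_eq_mul, Real.sqrt_mul (mul_self_nonneg c), Real.sqrt_mul_self hc]
  rw [traceNorm_eq_cfc, traceNorm_eq_cfc, hkey, ← cfc_comp_smul (c * c) Real.sqrt (Aᴴ * A), hf,
    cfc_const_mul c Real.sqrt (Aᴴ * A), real_smul_eq, Matrix.trace_smul, smul_eq_mul,
    Complex.mul_re, Complex.ofReal_re, Complex.ofReal_im, zero_mul, sub_zero]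

lemma traceNorm_sub_states_le_two {d : ℕ} {ρ σ : Matrix (Fin d) (Fin d) ℂ}
    (hρp : ρ.PosSemidef) (hρt : ρ.trace = 1) (hσp : σ.PosSemidef) (hσt : σ.trace = 1) :
    traceNorm (σ - ρ) ≤ 2 := by
  have hX : (σ - ρ).IsHermitian := hσp.1.sub hρp.1
  rw [traceNorm_hermitian hX]
  set U : Matrix (Fin d) (Fin d) ℂ := (hX.eigenvectorUnitary : Matrix (Fin d) (Fin d) ℂ) with hU
  have hUU : U * star U = 1 := (Matrix.mem_unitaryGroup_iff).mp hX.eigenvectorUnitary.2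
  have hdiag : star U * (σ - ρ) * U = Matrix.diagonal (RCLike.ofReal ∘ hX.eigenvalues) :=
    by simpa [Unitary.conjStarAlgAut_star_apply] using hX.conjStarAlgAut_star_eigenvectorUnitary
  set P := star U * ρ * U with hPdef
  have hP : P.PosSemidef := by
    show (star U * ρ * U).PosSemidef
    simpa [Matrix.star_eq_conjTranspose] using hρp.conjTranspose_mul_mul_same U
  have hS' : (star U * σ * U).PosSemidef := by
    simpa [Matrix.star_eq_conjTranspose] using hσp.conjTranspose_mul_mul_same U
  have hsplit : star U * σ * U = Matrix.diagonal (RCLike.ofReal ∘ hX.eigenvalues) + P := by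
    rw [← hdiag, hPdef]
    noncomm_ring
  have hbound : ∀ i, |hX.eigenvalues i| ≤ hX.eigenvalues i + 2 * (P i i).re := by
    intro i
    have h1 : 0 ≤ (P i i).re := (Complex.nonneg_iff.mp (psd_diag_nonneg hP i)).1
    have h2 : 0 ≤ ((Matrix.diagonal (RCLike.ofReal ∘ hX.eigenvalues) + P :
        Matrix (Fin d) (Fin d) ℂ) i i) :=
      psd_diag_nonneg (hsplit ▸ hS') i
    have h3 : -(hX.eigenvalues i) ≤ (P i i).re := by
      have := (Complex.nonneg_iff.mp h2).1
      simp only [Matrix.add_apply, Matrix.diagonal_apply_eq, Complex.add_re,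
        Function.comp_apply] at this
      have hre : ((hX.eigenvalues i : ℂ)).re = hX.eigenvalues i := Complex.ofReal_re _
      change 0 ≤ ((hX.eigenvalues i : ℂ)).re + (P i i).re at this
      rw [hre] at this
      linarith
    rcases abs_cases (hX.eigenvalues i) with ⟨h, _⟩ | ⟨h, _⟩ <;> linarith
  have hsum : ∑ i, |hX.eigenvalues i| ≤ ∑ i, (hX.eigenvalues i + 2 * (P i i).re) :=
    Finset.sum_le_sum (fun i _ => hbound i)
  refine le_trans hsum ?_
  rw [Finset.sum_add_distrib]
  have htr : (σ - ρ).trace = 0 := by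
    rw [Matrix.trace_sub, hσt, hρt, sub_self]
  have hsum_eig : ∑ i, hX.eigenvalues i = 0 := by
    have h0 := trace_eq_sum_eigs hX
    rw [htr] at h0
    have : ((∑ i, hX.eigenvalues i : ℝ) : ℂ) = 0 := by push_cast; rw [← h0]
    exact_mod_cast this
  have htrP : P.trace = 1 := by
    rw [hPdef, Matrix.trace_mul_comm, ← mul_assoc, hUU, one_mul, hρt]
  have hsumP : ∑ i, (P i i).re = 1 := by
    have : (P.trace).re = 1 := by rw [htrP]; rfl
    rw [Matrix.trace] at this
    rw [← this, Complex.re_sum]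
    rfl
  rw [hsum_eig, ← Finset.mul_sum, hsumP]
  norm_num

end Helpers

/-- For states `ρ, σ` and `η > 0`, the state
`ω := (2^{-η} σ + ρ)/(1 + 2^{-η})` satisfies `½‖ω - ρ‖₁ ≤ 2^{-η}/(1 + 2^{-η})` and
`D_Ω(ω‖σ) ≤ D_max(ρ‖σ) + log₂(2^η + 1)`. -/
theorem mixing_preserves_closeness_and_projective_bound {d : ℕ}
    (ρ σ : Matrix (Fin d) (Fin d) ℂ) (hρ : IsState ρ) (hσ : IsState σ)
    (η : ℝ) (hη : 0 < η)
    (ω : Matrix (Fin d) (Fin d) ℂ)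
    (hω : ω = (1 + (2 : ℝ) ^ (-η))⁻¹ • ((2 : ℝ) ^ (-η) • σ + ρ)) :
    (1 / 2) * traceNorm (ω - ρ) ≤ (2 : ℝ) ^ (-η) / (1 + (2 : ℝ) ^ (-η)) ∧
    DOmega ω σ ≤ Dmax ρ σ + ((Real.logb 2 ((2 : ℝ) ^ η + 1) : ℝ) : EReal) := by
  have ht : (0:ℝ) < (2 : ℝ) ^ (-η) := Real.rpow_pos_of_pos two_pos _
  set t : ℝ := (2 : ℝ) ^ (-η) with ht_def
  have h1t : (0:ℝ) < 1 + t := by linarith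
  have h2η : (0:ℝ) < (2:ℝ) ^ η := Real.rpow_pos_of_pos two_pos _
  have h2t : (2:ℝ) ^ η * t = 1 := by
    rw [ht_def, ← Real.rpow_add two_pos]
    simp
  constructor
  · have hsub : ω - ρ = (t / (1 + t)) • (σ - ρ) := by
      rw [hω]
      match_scalars <;> field_simp <;> ring
    rw [hsub, traceNorm_real_smul (by positivity) _]
    have h2 := traceNorm_sub_states_le_two hρ.1 hρ.2 hσ.1 hσ.2
    have hc : (0:ℝ) ≤ t / (1 + t) := by positivity
    nlinarith [mul_le_mul_of_nonneg_left h2 hc]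
  · have hA : Dmax ω σ ≤ Dmax ρ σ := by
      apply sInf_le_sInf_of_isCoinitialFor
      rintro x ⟨l, hl, hL, rfl⟩
      have hL' : (l • σ - ρ).PosSemidef := hL
      have hl1 : (1:ℝ) ≤ l := by
        have h0 : (0:ℂ) ≤ (l • σ - ρ).trace := psd_trace_nonneg hL'
        rw [Matrix.trace_sub, Matrix.trace_smul, hσ.2, hρ.2, Complex.real_smul, mul_one] at h0
        have h1 := (Complex.nonneg_iff.mp h0).1
        simp only [Complex.sub_re, Complex.ofReal_re, Complex.one_re] at h1
        linarith
      refine ⟨((Real.logb 2 ((t + l) / (1 + t)) : ℝ) : EReal),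
        ⟨(t + l) / (1 + t), by positivity, ?_, rfl⟩, ?_⟩
      · show (((t + l) / (1 + t)) • σ - ω).PosSemidef
        have heq : ((t + l) / (1 + t)) • σ - ω = (1 + t)⁻¹ • (l • σ - ρ) := by
          rw [hω]
          match_scalars <;> field_simp <;> ring
        rw [heq]
        exact psd_smul' hL' (by positivity)
      · have hle : (t + l) / (1 + t) ≤ l := by
          rw [div_le_iff₀ h1t]; nlinarith
        exact_mod_cast Real.logb_le_logb_of_le (by norm_num) (by positivity) hle
    have hB : Dmax σ ω ≤ ((Real.logb 2 ((2:ℝ) ^ η + 1) : ℝ) : EReal) := by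
      apply sInf_le
      refine ⟨(2:ℝ) ^ η + 1, by positivity, ?_, rfl⟩
      show ((((2:ℝ) ^ η + 1) • ω) - σ).PosSemidef
      have hexp : (2:ℝ) ^ η * (1 + t) = (2:ℝ) ^ η + 1 := by
        rw [mul_add, mul_one, h2t]
      have hcoef : ((2:ℝ) ^ η + 1) * (1 + t)⁻¹ = (2:ℝ) ^ η := by
        field_simp
        linarith [hexp]
      have heq : (((2:ℝ) ^ η + 1) • ω) - σ = ((2:ℝ) ^ η) • ρ := by
        rw [hω, smul_smul, hcoef, smul_add, smul_smul, h2t, one_smul, add_sub_cancel_left]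
      rw [heq]
      exact psd_smul' hρ.1 h2η.le
    show Dmax ω σ + Dmax σ ω ≤ _
    exact le_trans (add_le_add hA hB) (le_refl _)


end QRT
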